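/- Let (P,≤,',0,1) be a Boolean poset satisfying the ACC and the DCC, and define for subsets A,B ⊆ P: A + B := Min(U(Max(L(A' ∪ B)) ∪ Max(L(A ∪ B')))) and A · B := Max(L(A ∪ B)) (elements identified with singletons). Then for all x,y,z ∈ P and all subsets A,B ⊆ P: (i) x·x = {x}, x·y = y·x, x·0 = {0}, x·1 = {x}, and (x·(y·z))·z = (x·(y·z))·1; (ii) (x+1)+1 = {x}; (iii) x·y = {x} implies (x+1)·(y+1) = y+1; (iv) x·(x+1) = {0}; (v) ((x+1)·(y+1)+1)·z = ((x·z+1)·(y·z+1)+1)·1; (vi) x ∈ A·B if and only if x·y = {x} for all y ∈ A ∪ B and, for every z ∈ P, (x·z = {x} and z·y = {z} for all y ∈ A ∪ B) implies z = x. -/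
import Mathlib
set_option linter.unusedSectionVars false
set_option linter.unusedVariables false


/-- Lower bounds of a set in a preorder. -/
def LB {P : Type*} [Preorder P] (A : Set P) : Set P := {x | ∀ a ∈ A, x ≤ a}

/-- Upper bounds of a set in a preorder. -/
def UB {P : Type*} [Preorder P] (A : Set P) : Set P := {x | ∀ a ∈ A, a ≤ x}

/-- The set of maximal elements of a set. -/
def MaxS {P : Type*} [Preorder P] (A : Set P) : Set P :=
  {x | x ∈ A ∧ ∀ y ∈ A, x ≤ y → y = x}

/-- The set of minimal elements of a set. -/
def MinS {P : Type*} [Preorder P] (A : Set P) : Set P :=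
  {x | x ∈ A ∧ ∀ y ∈ A, y ≤ x → y = x}

/-- The symmetric difference A + B := Min U(Max L(A' ∪ B) ∪ Max L(A ∪ B')). -/
def pplus {P : Type*} [Preorder P] (c : P → P) (A B : Set P) : Set P :=
  MinS (UB (MaxS (LB ((c '' A) ∪ B)) ∪ MaxS (LB (A ∪ (c '' B)))))

/-- The multiplication A · B := Max L(A ∪ B). -/
def pmul {P : Type*} [Preorder P] (A B : Set P) : Set P := MaxS (LB (A ∪ B))

section helpers
variable {P : Type*} [PartialOrder P] [BoundedOrder P]

lemma LB_union (A B : Set P) : LB (A ∪ B) = LB A ∩ LB B := by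
  ext x; simp [LB, or_imp, forall_and]

lemma UB_union (A B : Set P) : UB (A ∪ B) = UB A ∩ UB B := by
  ext x; simp [UB, or_imp, forall_and]

lemma LB_singleton (a : P) : LB {a} = Set.Iic a := by ext x; simp [LB]
lemma UB_singleton (a : P) : UB {a} = Set.Ici a := by ext x; simp [UB]
lemma LB_Ici (a : P) : LB (Set.Ici a) = Set.Iic a := by
  ext x; simp only [LB, Set.mem_setOf_eq, Set.mem_Iic, Set.mem_Ici]
  exact ⟨fun h => h a le_rfl, fun h b hb => h.trans hb⟩
lemma UB_Iic (a : P) : UB (Set.Iic a) = Set.Ici a := by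
  ext x; simp only [UB, Set.mem_setOf_eq, Set.mem_Iic, Set.mem_Ici]
  exact ⟨fun h => h a le_rfl, fun h b hb => hb.trans h⟩
lemma MaxS_Iic (a : P) : MaxS (Set.Iic a) = {a} := by
  ext x
  simp only [MaxS, Set.mem_setOf_eq, Set.mem_Iic, Set.mem_singleton_iff]
  constructor
  · rintro ⟨h1, h2⟩
    exact (h2 a le_rfl h1).symm
  · rintro rfl
    exact ⟨le_rfl, fun y hy hxy => le_antisymm hy hxy⟩
lemma MinS_Ici (a : P) : MinS (Set.Ici a) = {a} := by
  ext x
  simp only [MinS, Set.mem_setOf_eq, Set.mem_Ici, Set.mem_singleton_iff]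
  constructor
  · rintro ⟨h1, h2⟩
    exact (h2 a le_rfl h1).symm
  · rintro rfl
    exact ⟨le_rfl, fun y hy hy' => le_antisymm hy' hy⟩
lemma MaxS_singleton (a : P) : MaxS ({a} : Set P) = {a} := by
  ext x; simp only [MaxS, Set.mem_setOf_eq, Set.mem_singleton_iff]
  exact ⟨fun h => h.1, fun h => ⟨h, fun y hy _ => hy.trans h.symm⟩⟩
lemma LB_top (A : Set P) : LB (A ∪ {⊤}) = LB A := by
  rw [LB_union, LB_singleton]; simp
lemma UB_bot (A : Set P) : UB (A ∪ {⊥}) = UB A := by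
  rw [UB_union, UB_singleton]; simp
lemma bot_mem_LB (A : Set P) : ⊥ ∈ LB A := fun a _ => bot_le
lemma LB_bot (A : Set P) : LB (A ∪ {⊥}) = {⊥} := by
  rw [LB_union, LB_singleton]
  ext x
  simp only [Set.mem_inter_iff, Set.mem_Iic, le_bot_iff, Set.mem_singleton_iff]
  exact ⟨fun h => h.2, fun h => ⟨h ▸ bot_mem_LB A, h⟩⟩
lemma UB_LB_UB (A : Set P) : UB (LB (UB A)) = UB A := by
  ext u
  constructor
  · intro h a ha
    exact h a (fun w hw => hw a ha)
  · intro h w hw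
    exact hw u h
lemma LB_UB_LB (A : Set P) : LB (UB (LB A)) = LB A := by
  ext u
  constructor
  · intro h a ha
    exact h a (fun w hw => hw a ha)
  · intro h w hw
    exact hw u h

lemma wf_of_acc (hACC : ∀ f : ℕ → P, ¬ StrictMono f) :
    WellFounded (fun a b : P => b < a) := by
  rw [RelEmbedding.wellFounded_iff_isEmpty]
  constructor
  intro e
  exact hACC e (fun m n h => e.map_rel_iff.2 h)

lemma exists_maxS (hACC : ∀ f : ℕ → P, ¬ StrictMono f) (W : Set P) {u : P} (hu : u ∈ W) :
    ∃ m ∈ MaxS W, u ≤ m := by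
  obtain ⟨m, ⟨hmW, hum⟩, hmin⟩ := (wf_of_acc hACC).has_min {w ∈ W | u ≤ w} ⟨u, hu, le_refl u⟩
  refine ⟨m, ⟨hmW, fun y hy hmy => ?_⟩, hum⟩
  by_contra h
  exact hmin y ⟨hy, hum.trans hmy⟩ (lt_of_le_of_ne hmy (fun e => h e.symm))

lemma exists_minS (hDCC : ∀ f : ℕ → P, ¬ StrictAnti f) (W : Set P) {u : P} (hu : u ∈ W) :
    ∃ m ∈ MinS W, m ≤ u := by
  have wf : WellFounded (fun a b : P => a < b) := by
    rw [RelEmbedding.wellFounded_iff_isEmpty]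
    constructor
    intro e
    exact hDCC e (fun m n h => e.map_rel_iff.2 h)
  obtain ⟨m, ⟨hmW, hum⟩, hmin⟩ := wf.has_min {w ∈ W | w ≤ u} ⟨u, hu, le_refl u⟩
  refine ⟨m, ⟨hmW, fun y hy hmy => ?_⟩, hum⟩
  by_contra h
  exact hmin y ⟨hy, hmy.trans hum⟩ (lt_of_le_of_ne hmy h)

lemma UB_MaxS (hACC : ∀ f : ℕ → P, ¬ StrictMono f) (W : Set P) : UB (MaxS W) = UB W := by
  ext u
  constructor
  · intro h w hw
    obtain ⟨m, hm, hwm⟩ := exists_maxS hACC W hw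
    exact hwm.trans (h m hm)
  · intro h w hw
    exact h w hw.1

lemma LB_MinS (hDCC : ∀ f : ℕ → P, ¬ StrictAnti f) (W : Set P) : LB (MinS W) = LB W := by
  ext u
  constructor
  · intro h w hw
    obtain ⟨m, hm, hwm⟩ := exists_minS hDCC W hw
    exact (h m hm).trans hwm
  · intro h w hw
    exact h w hw.1

lemma MaxS_nonempty (hACC : ∀ f : ℕ → P, ¬ StrictMono f) {W : Set P} (h : W.Nonempty) :
    (MaxS W).Nonempty := by
  obtain ⟨u, hu⟩ := h
  obtain ⟨m, hm, _⟩ := exists_maxS hACC W hu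
  exact ⟨m, hm⟩

variable {c : P → P}

lemma mem_image_c (hinv : ∀ x : P, c (c x) = x) {A : Set P} {x : P} :
    x ∈ c '' A ↔ c x ∈ A := by
  constructor
  · rintro ⟨a, ha, rfl⟩; rwa [hinv]
  · intro h; exact ⟨c x, h, hinv x⟩

lemma image_c_image_c (hinv : ∀ x : P, c (c x) = x) (A : Set P) : c '' (c '' A) = A := by
  ext x
  rw [mem_image_c hinv, mem_image_c hinv, hinv]

lemma c_le_iff (hanti : ∀ x y : P, x ≤ y → c y ≤ c x) (hinv : ∀ x : P, c (c x) = x)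
    {x y : P} : c x ≤ y ↔ c y ≤ x := by
  constructor <;> intro h <;> · have := hanti _ _ h; rwa [hinv] at this

lemma image_c_LB (hanti : ∀ x y : P, x ≤ y → c y ≤ c x) (hinv : ∀ x : P, c (c x) = x)
    (A : Set P) : c '' LB A = UB (c '' A) := by
  ext x
  rw [mem_image_c hinv]
  simp only [LB, UB, Set.mem_setOf_eq]
  constructor
  · intro h b hb
    rw [mem_image_c hinv] at hb
    have := hanti _ _ (h (c b) hb)
    simpa only [hinv] using this
  · intro h a ha
    have := hanti _ _ (h (c a) ((mem_image_c hinv).2 (by rwa [hinv])))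
    simpa only [hinv] using this

lemma image_c_UB (hanti : ∀ x y : P, x ≤ y → c y ≤ c x) (hinv : ∀ x : P, c (c x) = x)
    (A : Set P) : c '' UB A = LB (c '' A) := by
  ext x
  rw [mem_image_c hinv]
  simp only [LB, UB, Set.mem_setOf_eq]
  constructor
  · intro h b hb
    rw [mem_image_c hinv] at hb
    have := hanti _ _ (h (c b) hb)
    simpa only [hinv] using this
  · intro h a ha
    have := hanti _ _ (h (c a) ((mem_image_c hinv).2 (by rwa [hinv])))
    simpa only [hinv] using this

lemma image_c_MaxS (hanti : ∀ x y : P, x ≤ y → c y ≤ c x) (hinv : ∀ x : P, c (c x) = x)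
    (A : Set P) : c '' MaxS A = MinS (c '' A) := by
  ext x
  rw [mem_image_c hinv]
  simp only [MaxS, MinS, Set.mem_setOf_eq]
  rw [mem_image_c hinv]
  constructor
  · rintro ⟨h1, h2⟩
    refine ⟨h1, fun y hy hyx => ?_⟩
    rw [mem_image_c hinv] at hy
    have := h2 (c y) hy (hanti _ _ hyx)
    calc y = c (c y) := (hinv y).symm
      _ = c (c x) := by rw [this]
      _ = x := hinv x
  · rintro ⟨h1, h2⟩
    refine ⟨h1, fun y hy hxy => ?_⟩
    have hcy : c y ≤ x := by
      have := hanti _ _ hxy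
      simpa only [hinv] using this
    have := h2 (c y) ((mem_image_c hinv).2 (by rwa [hinv])) hcy
    calc y = c (c y) := (hinv y).symm
      _ = c x := by rw [this]

lemma image_c_MinS (hanti : ∀ x y : P, x ≤ y → c y ≤ c x) (hinv : ∀ x : P, c (c x) = x)
    (A : Set P) : c '' MinS A = MaxS (c '' A) := by
  ext x
  rw [mem_image_c hinv]
  simp only [MaxS, MinS, Set.mem_setOf_eq]
  rw [mem_image_c hinv]
  constructor
  · rintro ⟨h1, h2⟩
    refine ⟨h1, fun y hy hyx => ?_⟩
    rw [mem_image_c hinv] at hy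
    have := h2 (c y) hy (hanti _ _ hyx)
    calc y = c (c y) := (hinv y).symm
      _ = c (c x) := by rw [this]
      _ = x := hinv x
  · rintro ⟨h1, h2⟩
    refine ⟨h1, fun y hy hxy => ?_⟩
    have hcy : x ≤ c y := by
      have := hanti _ _ hxy
      simpa only [hinv] using this
    have := h2 (c y) ((mem_image_c hinv).2 (by rwa [hinv])) hcy
    calc y = c (c y) := (hinv y).symm
      _ = c x := by rw [this]

lemma LB_pair {P : Type*} [Preorder P] (a b : P) : LB ({a, b} : Set P) = Set.Iic a ∩ Set.Iic b := by
  ext x; simp [LB]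

end helpers

theorem stmt_15 {P : Type*} [PartialOrder P] [BoundedOrder P] (c : P → P)
    (hanti : ∀ x y : P, x ≤ y → c y ≤ c x)
    (hinv : ∀ x : P, c (c x) = x)
    (hcompL : ∀ x : P, LB {x, c x} = {(⊥ : P)})
    (hcompU : ∀ x : P, UB {x, c x} = {(⊤ : P)})
    (hdist : ∀ (x y : P) (A : Set P),
      UB (LB {x, y} ∪ A) = UB (LB (UB ({x} ∪ A) ∪ UB ({y} ∪ A))))
    (hACC : ∀ f : ℕ → P, ¬ StrictMono f)
    (hDCC : ∀ f : ℕ → P, ¬ StrictAnti f) :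
    (∀ x y z : P,
      pmul {x} {x} = {x} ∧
      pmul {x} {y} = pmul {y} {x} ∧
      pmul {x} {(⊥ : P)} = {(⊥ : P)} ∧
      pmul {x} {(⊤ : P)} = {x} ∧
      pmul (pmul {x} (pmul {y} {z})) {z} = pmul (pmul {x} (pmul {y} {z})) {(⊤ : P)}) ∧
    (∀ x : P, pplus c (pplus c {x} {(⊤ : P)}) {(⊤ : P)} = {x}) ∧
    (∀ x y : P, pmul {x} {y} = {x} →
      pmul (pplus c {x} {(⊤ : P)}) (pplus c {y} {(⊤ : P)}) = pplus c {y} {(⊤ : P)}) ∧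
    (∀ x : P, pmul {x} (pplus c {x} {(⊤ : P)}) = {(⊥ : P)}) ∧
    (∀ x y z : P,
      pmul (pplus c (pmul (pplus c {x} {(⊤ : P)}) (pplus c {y} {(⊤ : P)})) {(⊤ : P)}) {z} =
      pmul
        (pplus c
          (pmul (pplus c (pmul {x} {z}) {(⊤ : P)}) (pplus c (pmul {y} {z}) {(⊤ : P)}))
          {(⊤ : P)})
        {(⊤ : P)}) ∧
    (∀ (x : P) (A B : Set P), x ∈ pmul A B ↔
      ((∀ y ∈ A ∪ B, pmul {x} {y} = {x}) ∧
        ∀ z : P, (pmul {x} {z} = {x} ∧ ∀ y ∈ A ∪ B, pmul {z} {y} = {z}) → z = x)) := by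
  -- basic facts
  have hct : c ⊤ = ⊥ := by
    have h := hcompL (⊤ : P)
    have hm : c ⊤ ∈ LB ({⊤, c ⊤} : Set P) := by
      intro a ha
      rcases ha with rfl | rfl
      · exact le_top
      · exact le_rfl
    rw [h] at hm
    exact hm
  -- pplus with ⊤ on the right
  have hpt : ∀ S : Set P, pplus c S {(⊤ : P)} = MinS (UB (LB (c '' S))) := by
    intro S
    unfold pplus
    rw [Set.image_singleton, hct, LB_top, LB_bot, MaxS_singleton, UB_bot, UB_MaxS hACC]
  have hxt : ∀ x : P, pplus c {x} {(⊤ : P)} = {c x} := by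
    intro x
    rw [hpt, Set.image_singleton, LB_singleton, UB_Iic, MinS_Ici]
  -- characterization of pmul on singletons
  have hle : ∀ x y : P, pmul {x} {y} = {x} ↔ x ≤ y := by
    intro x y
    constructor
    · intro h
      have hx : x ∈ ({x} : Set P) := rfl
      rw [← h] at hx
      exact hx.1 y (Or.inr rfl)
    · intro h
      unfold pmul
      rw [Set.singleton_union]
      have hL : LB ({x, y} : Set P) = Set.Iic x := by
        rw [LB_pair]
        ext w
        simp only [Set.mem_inter_iff, Set.mem_Iic]
        exact ⟨fun hw => hw.1, fun hw => ⟨hw, hw.trans h⟩⟩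
      rw [hL, MaxS_Iic]
  have hcomm : ∀ A B : Set P, pmul A B = pmul B A := by
    intro A B; unfold pmul; rw [Set.union_comm]
  -- key lemma: (a·b)+1 = MinS (UB {c a, c b})
  have hjoin2 : ∀ a b : P, pplus c (pmul {a} {b}) {(⊤ : P)} = MinS (UB {c a, c b}) := by
    intro a b
    rw [hpt]
    unfold pmul
    rw [Set.singleton_union, image_c_MaxS hanti hinv, image_c_LB hanti hinv,
      Set.image_pair, LB_MinS hDCC, UB_LB_UB]
  have hjoin : ∀ x y : P,
      pplus c (pmul (pplus c {x} {(⊤ : P)}) (pplus c {y} {(⊤ : P)})) {(⊤ : P)}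
        = MinS (UB {x, y}) := by
    intro x y
    rw [hxt, hxt, hjoin2, hinv, hinv]
  -- dual distributivity
  have hdist' : ∀ (x y : P) (B : Set P),
      LB (UB {x, y} ∪ B) = LB (UB (LB ({x} ∪ B) ∪ LB ({y} ∪ B))) := by
    intro x y B
    have h := congrArg (Set.image c) (hdist (c x) (c y) (c '' B))
    simp only [Set.image_union, image_c_UB hanti hinv, image_c_LB hanti hinv,
      image_c_image_c hinv, Set.image_pair, Set.image_singleton, hinv] at h
    exact h
  refine ⟨?_, ?_, ?_, ?_, ?_, ?_⟩
  · -- (i)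
    intro x y z
    refine ⟨?_, hcomm _ _, ?_, ?_, ?_⟩
    · unfold pmul
      rw [Set.union_self, LB_singleton, MaxS_Iic]
    · unfold pmul
      rw [LB_bot, MaxS_singleton]
    · unfold pmul
      rw [LB_top, LB_singleton, MaxS_Iic]
    · show pmul (pmul {x} (pmul {y} {z})) {z} = pmul (pmul {x} (pmul {y} {z})) {(⊤ : P)}
      unfold pmul
      rw [LB_top, LB_union, LB_singleton]
      have hsub : LB (MaxS (LB ({x} ∪ MaxS (LB ({y} ∪ {z}))))) ⊆ Set.Iic z := by
        intro w hw
        obtain ⟨m, hm⟩ := MaxS_nonempty hACC ⟨⊥, bot_mem_LB ({y} ∪ {z})⟩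
        obtain ⟨t, ht⟩ := MaxS_nonempty hACC
          ⟨⊥, bot_mem_LB ({x} ∪ MaxS (LB ({y} ∪ {z})))⟩
        have hmz : m ≤ z := hm.1 z (Or.inr rfl)
        have htm : t ≤ m := ht.1 m (Or.inr hm)
        exact (hw t ht).trans (htm.trans hmz)
      rw [Set.inter_eq_self_of_subset_left hsub]
  · -- (ii)
    intro x
    rw [hxt, hxt, hinv]
  · -- (iii)
    intro x y h
    rw [hxt, hxt]
    rw [hle] at h
    exact (hcomm _ _).trans ((hle _ _).2 (hanti _ _ h))
  · -- (iv)
    intro x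
    rw [hxt]
    unfold pmul
    rw [Set.singleton_union, hcompL, MaxS_singleton]
  · -- (v)
    intro x y z
    rw [hjoin x y, hjoin2 x z, hjoin2 y z]
    have hstep : pplus c (pmul (MinS (UB {c x, c z})) (MinS (UB {c y, c z}))) {(⊤ : P)}
        = MinS (UB (LB {x, z} ∪ LB {y, z})) := by
      rw [hpt]
      unfold pmul
      rw [image_c_MaxS hanti hinv, image_c_LB hanti hinv, Set.image_union,
        image_c_MinS hanti hinv, image_c_MinS hanti hinv,
        image_c_UB hanti hinv, image_c_UB hanti hinv,
        Set.image_pair, Set.image_pair, hinv, hinv, hinv]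
      rw [UB_union, UB_MaxS hACC, UB_MaxS hACC, ← UB_union, LB_MinS hDCC, UB_LB_UB]
    rw [hstep]
    unfold pmul
    rw [LB_top, LB_union, LB_MinS hDCC, LB_singleton, LB_MinS hDCC]
    rw [← LB_singleton z, ← LB_union, hdist' x y {z}, Set.singleton_union, Set.singleton_union]
  · -- (vi)
    intro x A B
    constructor
    · intro hx
      obtain ⟨hx1, hx2⟩ := hx
      refine ⟨fun y hy => (hle x y).2 (hx1 y hy), fun z hz => ?_⟩
      obtain ⟨h1, h2⟩ := hz
      have hzLB : z ∈ LB (A ∪ B) := fun y hy => (hle z y).1 (h2 y hy)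
      exact hx2 z hzLB ((hle x z).1 h1)
    · rintro ⟨h1, h2⟩
      refine ⟨fun y hy => (hle x y).1 (h1 y hy), fun w hw hxw =>
        h2 w ⟨(hle x w).2 hxw, fun y hy => (hle w y).2 (hw y hy)⟩⟩
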